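/- In the discrete-time networked SEIR model under the well-posedness assumptions, the recovered level r_i^k is non-decreasing in k for each node i, and converges to a limit r_i^* = 1 − s_i^* where s_i^* = lim_{k→∞} s_i^k (i.e., the system converges to an equilibrium of the form (s^*, 0, 0, 1 − s^*)). -/

import Mathlib

/-- In the networked SEIR model the recovered level is non-decreasing
and the system converges to an equilibrium of the form (s*, 0, 0, 1 - s*). -/
theorem seir_r_monotone_limit
    (n : ℕ) (h : ℝ) (a : Fin n → Fin n → ℝ) (βE β σ γ : Fin n → ℝ)
    (s e p r : ℕ → Fin n → ℝ)
    (hh : 0 < h)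
    (ha : ∀ i j, 0 ≤ a i j) (hβE : ∀ i, 0 ≤ βE i) (hβ : ∀ i, 0 ≤ β i)
    (hγ : ∀ i, 0 < h * γ i ∧ h * γ i < 1)
    (hσ : ∀ i, 0 < h * σ i ∧ h * σ i ≤ 1)
    (hba : ∀ i, 0 ≤ h * (βE i + β i) * ∑ j, a i j ∧ h * (βE i + β i) * ∑ j, a i j < 1)
    (hs : ∀ k i, s (k+1) i = s k i -
      h * s k i * (βE i * ∑ j, a i j * e k j + β i * ∑ j, a i j * p k j))
    (he : ∀ k i, e (k+1) i = e k i +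
      h * s k i * (βE i * ∑ j, a i j * e k j + β i * ∑ j, a i j * p k j) - h * σ i * e k i)
    (hp : ∀ k i, p (k+1) i = p k i + h * (σ i * e k i - γ i * p k i))
    (hr : ∀ k i, r (k+1) i = r k i + h * γ i * p k i)
    (hinit : ∀ i, s 0 i ∈ Set.Icc (0:ℝ) 1 ∧ e 0 i ∈ Set.Icc (0:ℝ) 1 ∧
      p 0 i ∈ Set.Icc (0:ℝ) 1 ∧ r 0 i ∈ Set.Icc (0:ℝ) 1 ∧
      s 0 i + e 0 i + p 0 i + r 0 i = 1) :
    (∀ k i, r k i ≤ r (k+1) i) ∧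
    ∃ sstar : Fin n → ℝ, ∀ i,
      Filter.Tendsto (fun k => s k i) Filter.atTop (nhds (sstar i)) ∧
      Filter.Tendsto (fun k => r k i) Filter.atTop (nhds (1 - sstar i)) := by
  -- Invariant: all compartments nonnegative and sum to 1
  have inv : ∀ k i, 0 ≤ s k i ∧ 0 ≤ e k i ∧ 0 ≤ p k i ∧ 0 ≤ r k i ∧
      s k i + e k i + p k i + r k i = 1 := by
    intro k
    induction k with
    | zero =>
      intro i
      obtain ⟨hs0, he0, hp0, hr0, hsum⟩ := hinit i
      exact ⟨hs0.1, he0.1, hp0.1, hr0.1, hsum⟩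
    | succ k ih =>
      intro i
      obtain ⟨hsk, hek, hpk, hrk, hsum⟩ := ih i
      set ι := βE i * ∑ j, a i j * e k j + β i * ∑ j, a i j * p k j with hιdef
      have hsum_e : ∑ j, a i j * e k j ≤ ∑ j, a i j := by
        apply Finset.sum_le_sum
        intro j _
        obtain ⟨h1, h2, h3, h4, h5⟩ := ih j
        nlinarith [ha i j]
      have hsum_p : ∑ j, a i j * p k j ≤ ∑ j, a i j := by
        apply Finset.sum_le_sum
        intro j _
        obtain ⟨h1, h2, h3, h4, h5⟩ := ih j
        nlinarith [ha i j]
      have hsum_e0 : 0 ≤ ∑ j, a i j * e k j :=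
        Finset.sum_nonneg fun j _ => mul_nonneg (ha i j) (ih j).2.1
      have hsum_p0 : 0 ≤ ∑ j, a i j * p k j :=
        Finset.sum_nonneg fun j _ => mul_nonneg (ha i j) (ih j).2.2.1
      have hι0 : 0 ≤ ι := by
        apply add_nonneg (mul_nonneg (hβE i) hsum_e0) (mul_nonneg (hβ i) hsum_p0)
      have hι1 : h * ι < 1 := by
        have hb := (hba i).2
        have : ι ≤ (βE i + β i) * ∑ j, a i j := by
          have := mul_le_mul_of_nonneg_left hsum_e (hβE i)
          have := mul_le_mul_of_nonneg_left hsum_p (hβ i)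
          nlinarith
        nlinarith
      have hγi := hγ i
      have hσi := hσ i
      refine ⟨?_, ?_, ?_, ?_, ?_⟩
      · rw [hs k i, ← hιdef]
        have h0 : 0 ≤ s k i * (1 - h * ι) :=
          mul_nonneg hsk (by linarith)
        have h1 : s k i - h * s k i * ι = s k i * (1 - h * ι) := by ring
        linarith
      · rw [he k i, ← hιdef]
        have h1 : 0 ≤ e k i * (1 - h * σ i) := mul_nonneg hek (by linarith)
        have h2 : 0 ≤ h * s k i * ι := mul_nonneg (mul_nonneg hh.le hsk) hι0
        have h3 : e k i + h * s k i * ι - h * σ i * e k i = e k i * (1 - h * σ i) + h * s k i * ι := by ring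
        linarith
      · rw [hp k i]
        have h1 : 0 ≤ p k i * (1 - h * γ i) := mul_nonneg hpk (by linarith)
        have h2 : 0 ≤ h * σ i * e k i := mul_nonneg hσi.1.le hek
        nlinarith
      · rw [hr k i]
        have : 0 ≤ h * γ i * p k i := mul_nonneg hγi.1.le hpk
        linarith
      · rw [hs k i, he k i, hp k i, hr k i]
        ring_nf
        linarith [hsum]
  have hmono : ∀ k i, r k i ≤ r (k+1) i := by
    intro k i
    rw [hr k i]
    have : 0 ≤ h * γ i * p k i := mul_nonneg (hγ i).1.le (inv k i).2.2.1
    linarith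
  refine ⟨hmono, ?_⟩
  -- s is antitone and bounded below, hence converges
  have hs_anti : ∀ i, Antitone (fun k => s k i) := by
    intro i
    apply antitone_nat_of_succ_le
    intro k
    rw [hs k i]
    have hsum_e0 : 0 ≤ ∑ j, a i j * e k j :=
      Finset.sum_nonneg fun j _ => mul_nonneg (ha i j) (inv k j).2.1
    have hsum_p0 : 0 ≤ ∑ j, a i j * p k j :=
      Finset.sum_nonneg fun j _ => mul_nonneg (ha i j) (inv k j).2.2.1
    have : 0 ≤ h * s k i * (βE i * ∑ j, a i j * e k j + β i * ∑ j, a i j * p k j) :=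
      mul_nonneg (mul_nonneg hh.le (inv k i).1)
        (add_nonneg (mul_nonneg (hβE i) hsum_e0) (mul_nonneg (hβ i) hsum_p0))
    linarith
  have hs_bdd : ∀ i, BddBelow (Set.range fun k => s k i) := by
    intro i
    exact ⟨0, by rintro x ⟨k, rfl⟩; exact (inv k i).1⟩
  refine ⟨fun i => ⨅ k, s k i, fun i => ?_⟩
  have hsconv : Filter.Tendsto (fun k => s k i) Filter.atTop (nhds (⨅ k, s k i)) :=
    tendsto_atTop_ciInf (hs_anti i) (hs_bdd i)
  refine ⟨hsconv, ?_⟩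
  -- r is monotone and bounded above, hence converges
  have hr_mono : Monotone (fun k => r k i) := monotone_nat_of_le_succ (fun k => hmono k i)
  have hr_bdd : BddAbove (Set.range fun k => r k i) := by
    refine ⟨1, ?_⟩
    rintro x ⟨k, rfl⟩
    obtain ⟨h1, h2, h3, h4, h5⟩ := inv k i
    linarith
  have hrconv : Filter.Tendsto (fun k => r k i) Filter.atTop (nhds (⨆ k, r k i)) :=
    tendsto_atTop_ciSup hr_mono hr_bdd
  -- p tends to 0
  have hγpos : 0 < h * γ i := (hγ i).1
  have hσpos : 0 < h * σ i := (hσ i).1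
  have hpform : ∀ k, p k i = (r (k+1) i - r k i) / (h * γ i) := by
    intro k
    rw [hr k i]
    rw [eq_div_iff hγpos.ne']; ring
  have hr1conv : Filter.Tendsto (fun k => r (k+1) i) Filter.atTop (nhds (⨆ k, r k i)) :=
    hrconv.comp (Filter.tendsto_add_atTop_nat 1)
  have hpconv : Filter.Tendsto (fun k => p k i) Filter.atTop (nhds 0) := by
    have : Filter.Tendsto (fun k => (r (k+1) i - r k i) / (h * γ i)) Filter.atTop
        (nhds (((⨆ k, r k i) - (⨆ k, r k i)) / (h * γ i))) :=
      (hr1conv.sub hrconv).div_const _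
    simp only [sub_self, zero_div] at this
    exact this.congr (fun k => (hpform k).symm)
  -- e tends to 0
  have heform : ∀ k, e k i = (p (k+1) i - p k i + h * γ i * p k i) / (h * σ i) := by
    intro k
    rw [hp k i]
    rw [eq_div_iff hσpos.ne']
    ring
  have hp1conv : Filter.Tendsto (fun k => p (k+1) i) Filter.atTop (nhds 0) :=
    hpconv.comp (Filter.tendsto_add_atTop_nat 1)
  have heconv : Filter.Tendsto (fun k => e k i) Filter.atTop (nhds 0) := by
    have : Filter.Tendsto (fun k => (p (k+1) i - p k i + h * γ i * p k i) / (h * σ i))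
        Filter.atTop (nhds ((0 - 0 + h * γ i * 0) / (h * σ i))) :=
      ((hp1conv.sub hpconv).add (hpconv.const_mul (h * γ i))).div_const _
    simp only [sub_zero, mul_zero, add_zero, zero_div, zero_sub, neg_zero, zero_add] at this
    exact this.congr (fun k => (heform k).symm)
  -- r = 1 - s - e - p, take limits
  have hrform : ∀ k, r k i = 1 - s k i - e k i - p k i := by
    intro k
    have := (inv k i).2.2.2.2
    linarith
  have : Filter.Tendsto (fun k => 1 - s k i - e k i - p k i) Filter.atTop
      (nhds (1 - (⨅ k, s k i) - 0 - 0)) :=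
    ((tendsto_const_nhds.sub hsconv).sub heconv).sub hpconv
  simp only [sub_zero] at this
  exact this.congr (fun k => (hrform k).symm)
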